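/- arXiv:1203.6053 — 3 statements merged into one kernel-verified Lean document; each statement's English description precedes it below -/
import Mathlib

section
/- Let g ≥ 2 and k ≥ 1 be integers and let m₁,…,m_k be positive integers with ∑_{i=1}^k m_i = 2g − 2. Then for all natural numbers n₁,…,n_k with n_i ≤ m_i for every i and ∑_{i=1}^k n_i = g − 1, one has the inequality of rational numbers ∑_{i=1}^k n_i(n_i+1)/(2(m_i+1)) ≥ g/4 + (1/8)·(−2 + ∑_{i : m_i even} m_i/(m_i+1) + #{i : m_i is odd}). -/
lemma key_bound (m n : ℕ) :
    (n:ℚ)/2 - (m:ℚ)/8 + (if Odd m then (1:ℚ)/8 else (m:ℚ)/(8*((m:ℚ)+1)))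
      ≤ (n:ℚ)*((n:ℚ)+1)/(2*((m:ℚ)+1)) := by
  have hm1 : (0:ℚ) < (m:ℚ)+1 := by positivity
  rw [← sub_nonneg]
  by_cases h : Odd m
  · simp only [h, if_true]
    have h1 : (1:ℚ) ≤ (2*(n:ℚ) - m)^2 := by
      have hz : (2*(n:ℤ) - m) ≠ 0 := by
        intro hc
        have h2 : (m:ℤ) = 2 * n := by linarith
        have h3 : m = 2 * n := by exact_mod_cast h2
        have : Even m := ⟨n, by omega⟩
        exact (Nat.not_even_iff_odd.mpr h) this
      have : (1:ℤ) ≤ (2*(n:ℤ) - m)^2 := by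
        have := Int.one_le_abs hz
        nlinarith [abs_nonneg (2*(n:ℤ) - m), sq_abs (2*(n:ℤ) - m)]
      calc (1:ℚ) ≤ ((2*(n:ℤ) - m)^2 : ℤ) := by exact_mod_cast this
        _ = (2*(n:ℚ) - m)^2 := by push_cast; ring
    have expand : (n:ℚ)*((n:ℚ)+1)/(2*((m:ℚ)+1)) - ((n:ℚ)/2 - (m:ℚ)/8 + 1/8)
        = ((2*(n:ℚ) - m)^2 - 1) / (8*((m:ℚ)+1)) := by
      field_simp
      ring
    rw [expand]
    apply div_nonneg (by linarith) (by positivity)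
  · simp only [h, if_false]
    have expand : (n:ℚ)*((n:ℚ)+1)/(2*((m:ℚ)+1)) - ((n:ℚ)/2 - (m:ℚ)/8 + (m:ℚ)/(8*((m:ℚ)+1)))
        = (2*(n:ℚ) - m)^2 / (8*((m:ℚ)+1)) := by
      field_simp
      ring
    rw [expand]
    positivity

/-- Let `g ≥ 2`, `k ≥ 1`, and `m₁,…,m_k` positive integers with `∑ m_i = 2g − 2`.
Then for all natural numbers `n₁,…,n_k` with `n_i ≤ m_i` and `∑ n_i = g − 1`,
`∑ n_i(n_i+1)/(2(m_i+1)) ≥ g/4 + (1/8)(−2 + ∑_{m_i even} m_i/(m_i+1) + #{i : m_i odd})`. -/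
theorem upper_bound_core (g k : ℕ) (hg : 2 ≤ g) (hk : 1 ≤ k) (m : Fin k → ℕ)
    (hm : ∀ i, 0 < m i) (hmsum : ∑ i, m i = 2 * g - 2)
    (n : Fin k → ℕ) (hn : ∀ i, n i ≤ m i) (hnsum : ∑ i, n i = g - 1) :
    (g : ℚ) / 4 + (1 / 8) *
        (-2 + (∑ i ∈ Finset.univ.filter (fun i => Even (m i)), (m i : ℚ) / ((m i : ℚ) + 1))
          + ((Finset.univ.filter (fun i => Odd (m i))).card : ℚ))
      ≤ ∑ i, (n i : ℚ) * ((n i : ℚ) + 1) / (2 * ((m i : ℚ) + 1)) := by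
  set c : Fin k → ℚ := fun i => if Odd (m i) then (1:ℚ)/8 else (m i:ℚ)/(8*((m i:ℚ)+1)) with hc
  have main : ∑ i, ((n i:ℚ)/2 - (m i:ℚ)/8 + c i)
      ≤ ∑ i, (n i : ℚ) * ((n i : ℚ) + 1) / (2 * ((m i : ℚ) + 1)) :=
    Finset.sum_le_sum (fun i _ => key_bound (m i) (n i))
  have hsplit : ∑ i, ((n i:ℚ)/2 - (m i:ℚ)/8 + c i)
      = (∑ i, (n i:ℚ))/2 - (∑ i, (m i:ℚ))/8 + ∑ i, c i := by
    rw [Finset.sum_add_distrib, Finset.sum_sub_distrib, Finset.sum_div, Finset.sum_div]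
  have hns : (∑ i, (n i:ℚ)) = (g:ℚ) - 1 := by
    have : ((∑ i, n i : ℕ):ℚ) = ((g - 1 : ℕ):ℚ) := congrArg (Nat.cast : ℕ → ℚ) hnsum
    rw [Nat.cast_sum] at this
    rw [this, Nat.cast_sub (by omega)]
    norm_num
  have hms : (∑ i, (m i:ℚ)) = 2*(g:ℚ) - 2 := by
    have : ((∑ i, m i : ℕ):ℚ) = ((2*g - 2 : ℕ):ℚ) := congrArg (Nat.cast : ℕ → ℚ) hmsum
    rw [Nat.cast_sum] at this
    rw [this, Nat.cast_sub (by omega)]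
    push_cast; ring
  have hcs : ∑ i, c i
      = (∑ i ∈ Finset.univ.filter (fun i => Even (m i)), (m i : ℚ) / (8*((m i : ℚ) + 1)))
        + ((Finset.univ.filter (fun i => Odd (m i))).card : ℚ) / 8 := by
    rw [← Finset.sum_filter_add_sum_filter_not Finset.univ (fun i => Odd (m i)) c]
    have h1 : ∑ i ∈ Finset.univ.filter (fun i => Odd (m i)), c i
        = ((Finset.univ.filter (fun i => Odd (m i))).card : ℚ) / 8 := by
      have hval : ∀ i ∈ Finset.univ.filter (fun i => Odd (m i)), c i = 1/8 := by
        intro i hi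
        simp only [hc]
        rw [if_pos (Finset.mem_filter.mp hi).2]
      rw [Finset.sum_congr rfl hval, Finset.sum_const, nsmul_eq_mul]
      ring
    have h2 : ∑ i ∈ Finset.univ.filter (fun i => ¬ Odd (m i)), c i
        = ∑ i ∈ Finset.univ.filter (fun i => Even (m i)), (m i : ℚ) / (8*((m i : ℚ) + 1)) := by
      have : Finset.univ.filter (fun i => ¬ Odd (m i)) = Finset.univ.filter (fun i => Even (m i)) := by
        apply Finset.filter_congr
        intro i _
        exact Nat.not_odd_iff_even
      rw [this]
      refine Finset.sum_congr rfl (fun i hi => ?_)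
      simp only [hc]
      rw [if_neg (Nat.not_odd_iff_even.mpr (Finset.mem_filter.mp hi).2)]
    rw [h1, h2]; ring
  have heq : ∑ i ∈ Finset.univ.filter (fun i => Even (m i)), (m i : ℚ) / (8*((m i : ℚ) + 1))
      = (∑ i ∈ Finset.univ.filter (fun i => Even (m i)), (m i : ℚ) / ((m i : ℚ) + 1)) / 8 := by
    rw [Finset.sum_div]
    refine Finset.sum_congr rfl (fun i _ => ?_)
    rw [div_div]
    ring_nf
  rw [hsplit, hns, hms, hcs, heq] at main
  linarith [main]
end

section
/- Let g ≥ 2 and k ≥ 1 be integers and let m₁,…,m_k be positive integers with ∑_{i=1}^k m_i = 2g − 2. Then there exist natural numbers n₁,…,n_k with n_i ≤ m_i for every i and ∑_{i=1}^k n_i = g − 1 such that ∑_{i=1}^k n_i(n_i+1)/(2(m_i+1)) = g/4 + (1/8)·(−2 + ∑_{i : m_i even} m_i/(m_i+1) + #{i : m_i is odd}). Concretely, one may take n_i = m_i/2 whenever m_i is even, and split the indices with m_i odd (their number is even) into two halves of equal size, taking n_i = (m_i−1)/2 on one half and n_i = (m_i+1)/2 on the other. -/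
/-- Let `g ≥ 2`, `k ≥ 1`, and `m₁,…,m_k` positive integers with `∑ m_i = 2g − 2`.
Then there exist natural numbers `n₁,…,n_k` with `n_i ≤ m_i` and `∑ n_i = g − 1`
such that `∑ n_i(n_i+1)/(2(m_i+1))
  = g/4 + (1/8)(−2 + ∑_{m_i even} m_i/(m_i+1) + #{i : m_i odd})`. -/
theorem upper_bound_attained (g k : ℕ) (hg : 2 ≤ g) (hk : 1 ≤ k) (m : Fin k → ℕ)
    (hm : ∀ i, 0 < m i) (hmsum : ∑ i, m i = 2 * g - 2) :
    ∃ n : Fin k → ℕ, (∀ i, n i ≤ m i) ∧ (∑ i, n i = g - 1) ∧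
      ∑ i, (n i : ℚ) * ((n i : ℚ) + 1) / (2 * ((m i : ℚ) + 1)) =
        (g : ℚ) / 4 + (1 / 8) *
          (-2 + (∑ i ∈ Finset.univ.filter (fun i => Even (m i)), (m i : ℚ) / ((m i : ℚ) + 1))
            + ((Finset.univ.filter (fun i => Odd (m i))).card : ℚ)) := by
  classical
  set O : Finset (Fin k) := Finset.univ.filter (fun i => Odd (m i)) with hO
  have hOeven : Even O.card := by
    rw [hO, ← Finset.even_sum_iff_even_card_odd m, hmsum]
    exact ⟨g - 1, by omega⟩
  obtain ⟨H, hHsub, hHcard⟩ := Finset.exists_subset_card_eq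
    (show O.card / 2 ≤ O.card from Nat.div_le_self _ _)
  set n : Fin k → ℕ := fun i =>
    if Odd (m i) then (if i ∈ H then (m i + 1) / 2 else (m i - 1) / 2) else m i / 2 with hn
  have hle : ∀ i, n i ≤ m i := by
    intro i
    simp only [hn]
    split_ifs with h1 h2
    · obtain ⟨t, ht⟩ := h1; omega
    · omega
    · omega
  -- card facts
  obtain ⟨c0, hc0⟩ := hOeven
  have hcardsd : (O \ H).card = O.card / 2 := by
    rw [Finset.card_sdiff_of_subset hHsub, hHcard]; omega
  have hHO : ∀ i ∈ H, Odd (m i) := fun i hi => (Finset.mem_filter.mp (hHsub hi)).2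
  have hSD : ∀ i ∈ O \ H, Odd (m i) ∧ i ∉ H := by
    intro i hi
    have := Finset.mem_sdiff.mp hi
    exact ⟨(Finset.mem_filter.mp this.1).2, this.2⟩
  -- cast of n
  have hcast : ∀ i, (n i : ℚ) = (m i : ℚ) / 2 +
      (if Odd (m i) then (if i ∈ H then (1:ℚ)/2 else -(1:ℚ)/2) else 0) := by
    intro i
    simp only [hn]
    split_ifs with h1 h2
    · obtain ⟨t, ht⟩ := h1
      have : (m i + 1) / 2 = t + 1 := by omega
      rw [this, ht]; push_cast; ring
    · obtain ⟨t, ht⟩ := h1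
      have : (m i - 1) / 2 = t := by omega
      rw [this, ht]; push_cast; ring
    · have h2 : Even (m i) := Nat.not_odd_iff_even.mp h1
      obtain ⟨t, ht⟩ := h2
      have : m i / 2 = t := by omega
      rw [this, ht]; push_cast; ring
  -- sum of the correction terms
  have hsplitO : ∀ c : Fin k → ℚ, ∑ i ∈ O, c i = ∑ i ∈ O \ H, c i + ∑ i ∈ H, c i :=
    fun c => (Finset.sum_sdiff hHsub).symm
  have hfilternot : Finset.univ.filter (fun i => ¬ Odd (m i))
      = Finset.univ.filter (fun i => Even (m i)) := by
    apply Finset.filter_congr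
    intro i _
    simp [Nat.not_odd_iff_even]
  have hmsumQ : (∑ i, (m i : ℚ)) = 2 * (g : ℚ) - 2 := by
    rw [← Nat.cast_sum, hmsum]
    have h2 : (2:ℕ) ≤ 2 * g := by omega
    push_cast [Nat.cast_sub h2]
    ring
  -- sum of n equals g - 1
  have hsumn : ∑ i, n i = g - 1 := by
    have key : ((∑ i, n i : ℕ) : ℚ) = (g : ℚ) - 1 := by
      rw [Nat.cast_sum]
      calc ∑ i, (n i : ℚ)
          = ∑ i, ((m i : ℚ) / 2 +
            (if Odd (m i) then (if i ∈ H then (1:ℚ)/2 else -(1:ℚ)/2) else 0)) := by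
            exact Finset.sum_congr rfl (fun i _ => hcast i)
        _ = (∑ i, (m i : ℚ)) / 2 +
            ∑ i, (if Odd (m i) then (if i ∈ H then (1:ℚ)/2 else -(1:ℚ)/2) else 0) := by
            rw [Finset.sum_add_distrib, Finset.sum_div]
        _ = (g : ℚ) - 1 := by
            rw [hmsumQ]
            rw [← Finset.sum_filter, ← hO, hsplitO]
            have e1 : ∑ i ∈ H, (if i ∈ H then (1:ℚ)/2 else -(1:ℚ)/2) = H.card * (1/2) := by
              rw [Finset.sum_congr rfl (fun i hi => if_pos hi), Finset.sum_const,
                nsmul_eq_mul]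
            have e2 : ∑ i ∈ O \ H, (if i ∈ H then (1:ℚ)/2 else -(1:ℚ)/2)
                = (O \ H).card * (-(1:ℚ)/2) := by
              rw [Finset.sum_congr rfl (fun i hi => if_neg (hSD i hi).2), Finset.sum_const,
                nsmul_eq_mul]
            rw [e1, e2, hcardsd, hHcard]
            ring
    have hg1 : ((g - 1 : ℕ) : ℚ) = (g : ℚ) - 1 := by
      push_cast [Nat.cast_sub (show 1 ≤ g by omega)]; ring
    exact_mod_cast key.trans hg1.symm
  refine ⟨n, hle, hsumn, ?_⟩
  -- per index value of the main term
  have hterm : ∀ i, (n i : ℚ) * ((n i : ℚ) + 1) / (2 * ((m i : ℚ) + 1)) =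
      (m i : ℚ) / 8 + (if Odd (m i) then (if i ∈ H then (3:ℚ)/8 else -(1:ℚ)/8)
        else (m i : ℚ) / (8 * ((m i : ℚ) + 1))) := by
    intro i
    have hmne : ((m i : ℚ) + 1) ≠ 0 := by positivity
    simp only [hn]
    split_ifs with h1 h2
    · obtain ⟨t, ht⟩ := h1
      have hdiv : (m i + 1) / 2 = t + 1 := by omega
      rw [hdiv, ht]
      have ht1 : ((t:ℚ) + 1) ≠ 0 := by positivity
      push_cast
      field_simp
      ring
    · obtain ⟨t, ht⟩ := h1
      have hdiv : (m i - 1) / 2 = t := by omega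
      rw [hdiv, ht]
      have ht1 : ((t:ℚ) + 1) ≠ 0 := by positivity
      push_cast
      field_simp
      ring
    · have h2 : Even (m i) := Nat.not_odd_iff_even.mp h1
      obtain ⟨t, ht⟩ := h2
      have hdiv : m i / 2 = t := by omega
      rw [hdiv, ht]
      have ht1 : (2*(t:ℚ) + 1) ≠ 0 := by positivity
      push_cast
      field_simp
      ring
  calc ∑ i, (n i : ℚ) * ((n i : ℚ) + 1) / (2 * ((m i : ℚ) + 1))
      = ∑ i, ((m i : ℚ) / 8 + (if Odd (m i) then (if i ∈ H then (3:ℚ)/8 else -(1:ℚ)/8)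
        else (m i : ℚ) / (8 * ((m i : ℚ) + 1)))) :=
        Finset.sum_congr rfl (fun i _ => hterm i)
    _ = (∑ i, (m i : ℚ)) / 8 + ∑ i, (if Odd (m i) then (if i ∈ H then (3:ℚ)/8 else -(1:ℚ)/8)
        else (m i : ℚ) / (8 * ((m i : ℚ) + 1))) := by
        rw [Finset.sum_add_distrib, Finset.sum_div]
    _ = _ := by
        rw [hmsumQ]
        rw [← Finset.sum_filter_add_sum_filter_not Finset.univ (fun i => Odd (m i))]
        have eO : ∑ i ∈ Finset.univ.filter (fun i => Odd (m i)),
            (if Odd (m i) then (if i ∈ H then (3:ℚ)/8 else -(1:ℚ)/8)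
              else (m i : ℚ) / (8 * ((m i : ℚ) + 1)))
            = (O \ H).card * (-(1:ℚ)/8) + H.card * ((3:ℚ)/8) := by
          rw [← hO, hsplitO]
          congr 1
          · rw [Finset.sum_congr rfl (fun i hi => by
              rw [if_pos (hSD i hi).1, if_neg (hSD i hi).2]), Finset.sum_const, nsmul_eq_mul]
          · rw [Finset.sum_congr rfl (fun i hi => by
              rw [if_pos (hHO i hi), if_pos hi]), Finset.sum_const, nsmul_eq_mul]
        have eE : ∑ i ∈ Finset.univ.filter (fun i => ¬ Odd (m i)),
            (if Odd (m i) then (if i ∈ H then (3:ℚ)/8 else -(1:ℚ)/8)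
              else (m i : ℚ) / (8 * ((m i : ℚ) + 1)))
            = ∑ i ∈ Finset.univ.filter (fun i => Even (m i)),
              (m i : ℚ) / (8 * ((m i : ℚ) + 1)) := by
          rw [hfilternot]
          refine Finset.sum_congr rfl (fun i hi => ?_)
          rw [if_neg (Nat.not_odd_iff_even.mpr (Finset.mem_filter.mp hi).2)]
        rw [eO, eE, hcardsd, hHcard]
        have eE2 : ∑ i ∈ Finset.univ.filter (fun i => Even (m i)),
            (m i : ℚ) / (8 * ((m i : ℚ) + 1))
            = (1/8) * ∑ i ∈ Finset.univ.filter (fun i => Even (m i)),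
              (m i : ℚ) / ((m i : ℚ) + 1) := by
          rw [Finset.mul_sum]
          refine Finset.sum_congr rfl (fun i hi => ?_)
          have hne : ((m i : ℚ) + 1) ≠ 0 := by positivity
          field_simp
        rw [eE2]
        have hOc : ((O.card : ℚ)) = ((Finset.univ.filter (fun i => Odd (m i))).card : ℚ) := by
          rw [hO]
        have hcc : O.card / 2 = c0 := by omega
        rw [hcc, ← hOc]
        have : (O.card : ℚ) = 2 * c0 := by rw [hc0]; push_cast; ring
        rw [this]
        ring
end

section
/- Let H be an additive submonoid of the natural numbers ℕ whose gap set G = ℕ \ H is finite of cardinality g. Then ∑_{n ∈ G} n ≤ g², equivalently the weight w(H) = (∑_{n ∈ G} n) − g(g+1)/2 satisfies w(H) ≤ g(g−1)/2; moreover equality holds if and only if 2 ∈ H. -/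
open Finset

/-- Let `H` be an additive submonoid of `ℕ` whose gap set `G = ℕ \ H` is finite
of cardinality `g`. Then `∑_{n ∈ G} n ≤ g²`, with equality if and only if `2 ∈ H`. -/
theorem weight_bound (H : AddSubmonoid ℕ) (g : ℕ)
    (hfin : {n : ℕ | n ∉ H}.Finite) (hcard : hfin.toFinset.card = g) :
    (∑ n ∈ hfin.toFinset, n) ≤ g ^ 2 ∧
      ((∑ n ∈ hfin.toFinset, n) = g ^ 2 ↔ (2 : ℕ) ∈ H) := by
  classical
  set G := hfin.toFinset with hG
  have hmemG : ∀ n, n ∈ G ↔ n ∉ H := fun n => by simp [hG]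
  set c : ℕ → ℕ := fun n => (G.filter (· ≤ n)).card with hc
  -- Key: for each gap n, n + 1 ≤ 2 * (number of gaps ≤ n)
  have key : ∀ n ∈ G, n + 1 ≤ 2 * c n := by
    intro n hn
    have hnH : n ∉ H := (hmemG n).1 hn
    set A := (range (n+1)).filter (· ∈ H) with hA
    set B := (range (n+1)).filter (fun m => m ∉ H) with hB
    have hAB : A.card + B.card = n + 1 := by
      simpa using card_filter_add_card_filter_not
        (s := range (n+1)) (p := (· ∈ H))
    have hBle : B.card ≤ c n := by
      apply card_le_card
      intro m hm
      simp only [hB, mem_filter, mem_range, Nat.lt_succ_iff] at hm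
      simp only [mem_filter, hmemG]
      exact ⟨hm.2, hm.1⟩
    have hAle : A.card ≤ B.card := by
      apply card_le_card_of_injOn (fun a => n - a)
      · intro a ha
        simp only [hA, mem_coe, mem_filter, mem_range, Nat.lt_succ_iff] at ha
        simp only [hB, mem_coe, mem_filter, mem_range, Nat.lt_succ_iff]
        refine ⟨Nat.sub_le n a, fun hmem => hnH ?_⟩
        have h : a + (n - a) = n := Nat.add_sub_cancel' ha.1
        exact h ▸ H.add_mem ha.2 hmem
      · intro a ha b hb hab
        simp only [hA, coe_filter, Set.mem_setOf_eq, mem_range, Nat.lt_succ_iff] at ha hb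
        simp only [] at hab
        omega
    omega
  have hcsum : ∀ n, c n = ∑ m ∈ G, if m ≤ n then 1 else 0 := fun n => by
    rw [hc]; exact Finset.card_filter _ _
  -- Double counting: 2 * ∑ c n = g² + g
  have hdouble : 2 * ∑ n ∈ G, c n = g ^ 2 + g := by
    have h1 : ∑ n ∈ G, c n = ∑ n ∈ G, ∑ m ∈ G, if m ≤ n then 1 else 0 :=
      Finset.sum_congr rfl fun n _ => hcsum n
    have h2 : (∑ n ∈ G, ∑ m ∈ G, if m ≤ n then (1:ℕ) else 0)
        = ∑ n ∈ G, ∑ m ∈ G, if n ≤ m then 1 else 0 := Finset.sum_comm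
    have h3 : (∑ n ∈ G, ∑ m ∈ G, if m ≤ n then (1:ℕ) else 0)
        + (∑ n ∈ G, ∑ m ∈ G, if n ≤ m then (1:ℕ) else 0)
        = ∑ n ∈ G, ∑ m ∈ G, (1 + if n = m then 1 else 0) := by
      rw [← Finset.sum_add_distrib]
      refine Finset.sum_congr rfl fun n _ => ?_
      rw [← Finset.sum_add_distrib]
      refine Finset.sum_congr rfl fun m _ => ?_
      split_ifs <;> omega
    have h4 : (∑ n ∈ G, ∑ m ∈ G, ((1:ℕ) + if n = m then 1 else 0)) = g * (g + 1) := by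
      have : ∀ n ∈ G, (∑ m ∈ G, ((1:ℕ) + if n = m then 1 else 0)) = g + 1 := by
        intro n hn
        rw [Finset.sum_add_distrib, Finset.sum_const, Finset.sum_ite_eq, if_pos hn]
        simp [hcard]
      rw [Finset.sum_congr rfl this, Finset.sum_const, hcard, smul_eq_mul]
    rw [two_mul, h1]
    nth_rewrite 2 [h2]
    rw [h3, h4]
    ring
  have hbound : ∑ n ∈ G, (n+1) ≤ 2 * ∑ n ∈ G, c n := by
    rw [Finset.mul_sum]
    exact Finset.sum_le_sum key
  have hsplit : ∑ n ∈ G, (n+1) = (∑ n ∈ G, n) + g := by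
    rw [Finset.sum_add_distrib, Finset.sum_const, hcard, smul_eq_mul, mul_one]
  have hsum_le : ∑ n ∈ G, n ≤ g ^ 2 := by
    rw [hdouble, hsplit] at hbound; omega
  -- strict inequality when 2 is a gap (parity argument)
  have hstrict : (2:ℕ) ∈ G → ∑ n ∈ G, n < g ^ 2 := by
    intro h2
    have hlt : ∑ n ∈ G, (n+1) < 2 * ∑ n ∈ G, c n := by
      rw [Finset.mul_sum]
      refine Finset.sum_lt_sum key ⟨2, h2, ?_⟩
      have := key 2 h2
      omega
    rw [hdouble, hsplit] at hlt; omega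
  -- equality when 2 ∈ H
  have heq : (2:ℕ) ∈ H → ∑ n ∈ G, n = g ^ 2 := by
    intro h2
    have heven : ∀ k, 2 * k ∈ H := by
      intro k
      induction k with
      | zero => simpa using H.zero_mem
      | succ k ih =>
        have := H.add_mem ih h2
        simpa [Nat.mul_succ] using this
    have hdown : ∀ k, 2*k+1 ∈ G → ∀ j ≤ k, 2*j+1 ∈ G := by
      intro k hk j hj
      rw [hmemG]; intro hjH
      apply (hmemG _).1 hk
      have h : 2*k+1 = (2*j+1) + 2*(k-j) := by omega
      rw [h]; exact H.add_mem hjH (heven _)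
    have hinj : Function.Injective (fun i : ℕ => 2*i+1) := by
      intro a b hab; simp only [] at hab; omega
    have hGsub : G ⊆ (range g).image (fun i => 2*i+1) := by
      intro n hn
      have hnH := (hmemG n).1 hn
      obtain ⟨k, hk⟩ : ∃ k, n = 2*k+1 := by
        rcases Nat.even_or_odd n with he | ho
        · exact absurd (he.two_dvd.elim fun m hm => hm ▸ heven m) hnH
        · exact ho
      have hsub : (range (k+1)).image (fun j => 2*j+1) ⊆ G := by
        intro m hm
        simp only [mem_image, mem_range, Nat.lt_succ_iff] at hm
        obtain ⟨j, hj, rfl⟩ := hm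
        exact hdown k (hk ▸ hn) j hj
      have hcard' : k + 1 ≤ g := by
        have := card_le_card hsub
        rwa [Finset.card_image_of_injective _ hinj, Finset.card_range, hcard] at this
      simp only [mem_image, mem_range]
      exact ⟨k, by omega, hk.symm⟩
    have hGeq : G = (range g).image (fun i => 2*i+1) := by
      apply Finset.eq_of_subset_of_card_le hGsub
      rw [Finset.card_image_of_injective _ hinj, Finset.card_range, hcard]
    rw [hGeq, Finset.sum_image (fun a _ b _ h => hinj h)]
    have hgauss : (∑ i ∈ range g, i) * 2 = g * (g - 1) := Finset.sum_range_id_mul_two g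
    have : ∑ i ∈ range g, (2*i+1) = (∑ i ∈ range g, i) * 2 + g := by
      rw [Finset.sum_add_distrib, Finset.sum_const, Finset.card_range, smul_eq_mul, mul_one,
        ← Finset.mul_sum, mul_comm]
    rw [this, hgauss]
    rcases g with _ | t
    · rfl
    · simp only [Nat.succ_sub_one]; ring
  refine ⟨hsum_le, ⟨fun h => ?_, heq⟩⟩
  by_contra h2
  exact absurd h (Nat.ne_of_lt (hstrict ((hmemG 2).2 h2)))
end
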